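/- Let 0 < γ < 1, t > 0, and define G_γ(u,t) = (max(1,|a₀|)/(1-γ)) · 1_{(-∞,t+1)}(u) · ((t - u + 2)^{1-γ} − (max(-u,0))^{1-γ}). Then for every α with 1/γ < α ≤ 2 (equivalently γ > 1/α), ∫_{-∞}^{∞} |G_γ(u,t)|^α du < ∞. -/

import Mathlib

open MeasureTheory

theorem bern (p v s : ℝ) (hp0 : 0 ≤ p) (hp1 : p ≤ 1) (hv : 1 ≤ v) (hs : 0 ≤ s) :
    (v + s) ^ p - v ^ p ≤ p * s * v ^ (p - 1) := by
  have hv0 : 0 < v := lt_of_lt_of_le one_pos hv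
  have h1 : (v + s) ^ p = v ^ p * (1 + s / v) ^ p := by
    rw [← Real.mul_rpow hv0.le (by positivity), mul_add, mul_one,
      mul_div_cancel₀ _ hv0.ne']
  have h2 : (1 + s / v) ^ p ≤ 1 + p * (s / v) :=
    rpow_one_add_le_one_add_mul_self (le_trans (by norm_num) (div_nonneg hs hv0.le)) hp0 hp1
  have h3 : v ^ p * (1 + s / v) ^ p ≤ v ^ p * (1 + p * (s / v)) :=
    mul_le_mul_of_nonneg_left h2 (Real.rpow_nonneg hv0.le p)
  have h4 : v ^ (p - 1) = v ^ p / v := by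
    rw [Real.rpow_sub hv0, Real.rpow_one]
  rw [h1, h4]
  calc v ^ p * (1 + s / v) ^ p - v ^ p ≤ v ^ p * (1 + p * (s / v)) - v ^ p := by linarith
    _ = p * s * (v ^ p / v) := by ring

/-- The dominating function `G_γ(u,t)`. -/
noncomputable def Gfun (γ t a₀ : ℝ) : ℝ → ℝ :=
  Set.indicator (Set.Iio (t + 1))
    (fun u => (max 1 |a₀| / (1 - γ)) *
      ((t - u + 2) ^ (1 - γ) - (max (-u) 0) ^ (1 - γ)))

theorem stmt_4 (γ t a₀ α : ℝ) (hγ0 : 0 < γ) (hγ1 : γ < 1) (ht : 0 < t)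
    (hα1 : 1 / γ < α) (hα2 : α ≤ 2) :
    Integrable (fun u : ℝ => |Gfun γ t a₀ u| ^ α) := by
  have hp0 : (0:ℝ) < 1 - γ := by linarith
  have hα0 : 0 < α := lt_trans (by positivity) hα1
  have hγα : 1 < γ * α := by
    rw [div_lt_iff₀ hγ0] at hα1
    rw [mul_comm]; linarith
  set M : ℝ := max 1 |a₀| with hM
  have hM1 : (1:ℝ) ≤ M := le_max_left _ _
  have hM0 : (0:ℝ) < M := lt_of_lt_of_le one_pos hM1
  set C : ℝ := M / (1 - γ) with hC
  have hC0 : 0 ≤ C := by positivity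
  set h : ℝ → ℝ := fun u => C * ((t - u + 2) ^ (1 - γ) - (max (-u) 0) ^ (1 - γ)) with hh
  set F : ℝ → ℝ := fun u => |h u| ^ α with hF
  -- continuity of F
  have hcont : Continuous F := by
    have c1 : Continuous fun u : ℝ => (t - u + 2) ^ (1 - γ) :=
      (Real.continuous_rpow_const hp0.le).comp (by fun_prop)
    have c2 : Continuous fun u : ℝ => (max (-u) 0) ^ (1 - γ) :=
      (Real.continuous_rpow_const hp0.le).comp (by fun_prop)
    exact (Real.continuous_rpow_const hα0.le).comp
      ((continuous_const.mul (c1.sub c2)).abs)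
  -- rewrite as indicator
  have heq : (fun u : ℝ => |Gfun γ t a₀ u| ^ α) = Set.indicator (Set.Iio (t + 1)) F := by
    funext u
    by_cases hu : u ∈ Set.Iio (t + 1)
    · simp [Gfun, Set.indicator_of_mem hu, hF, hh, hC, hM]
    · simp [Gfun, Set.indicator_of_notMem hu, Real.zero_rpow hα0.ne']
  rw [heq, integrable_indicator_iff measurableSet_Iio]
  have hsub : Set.Iio (t + 1) ⊆ Set.Iio (-1) ∪ Set.Icc (-1) (t + 1) := by
    intro u hu
    rcases lt_or_ge u (-1) with h' | h'
    · exact Or.inl h'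
    · exact Or.inr ⟨h', le_of_lt hu⟩
  refine IntegrableOn.mono_set ?_ hsub
  rw [integrableOn_union]
  constructor
  · -- tail part
    set K : ℝ := (M * (t + 2)) ^ α with hK
    have hdom : IntegrableOn (fun u : ℝ => K * (-u) ^ (-(γ * α))) (Set.Iio (-1)) := by
      have hIoi : IntegrableOn (fun x : ℝ => K * x ^ (-(γ * α))) (Set.Ioi (1:ℝ)) :=
        (integrableOn_Ioi_rpow_of_lt (by linarith) one_pos).const_mul K
      have h1 : Integrable (Set.indicator (Set.Ioi (1:ℝ)) fun x => K * x ^ (-(γ * α))) := by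
        rwa [integrable_indicator_iff measurableSet_Ioi]
      have h2 := h1.comp_neg
      have h3 : (fun x : ℝ => Set.indicator (Set.Ioi (1:ℝ)) (fun x => K * x ^ (-(γ * α))) (-x))
          = Set.indicator (Set.Iio (-1:ℝ)) (fun u => K * (-u) ^ (-(γ * α))) := by
        funext x
        by_cases hx : x < -1
        · rw [Set.indicator_of_mem (Set.mem_Iio.mpr hx),
            Set.indicator_of_mem (Set.mem_Ioi.mpr (by linarith))]
        · rw [Set.indicator_of_notMem (fun hc => hx (Set.mem_Iio.mp hc)),
            Set.indicator_of_notMem (fun hc => hx (by have := Set.mem_Ioi.mp hc; linarith))]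
      rw [h3] at h2
      rwa [integrable_indicator_iff measurableSet_Iio] at h2
    refine Integrable.mono' hdom (hcont.aestronglyMeasurable.restrict) ?_
    filter_upwards [ae_restrict_mem measurableSet_Iio] with u hu
    have hu1 : u < -1 := hu
    set v : ℝ := -u with hv
    have hv1 : (1:ℝ) ≤ v := by simp [hv]; linarith
    have hv0 : (0:ℝ) < v := lt_of_lt_of_le one_pos hv1
    have hmax : max (-u) 0 = v := max_eq_left (by linarith)
    have hbase : t - u + 2 = v + (t + 2) := by simp [hv]; ring
    have hdiff0 : 0 ≤ (v + (t + 2)) ^ (1 - γ) - v ^ (1 - γ) := by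
      have := Real.rpow_le_rpow hv0.le (by linarith : v ≤ v + (t + 2)) hp0.le
      linarith
    have hle1 : h u ≤ M * (t + 2) * v ^ (-γ) := by
      have hb := bern (1 - γ) v (t + 2) hp0.le (by linarith) hv1 (by linarith)
      have : h u = C * ((v + (t + 2)) ^ (1 - γ) - v ^ (1 - γ)) := by
        simp only [hh]; rw [hmax, hbase]
      rw [this]
      calc C * ((v + (t + 2)) ^ (1 - γ) - v ^ (1 - γ))
          ≤ C * ((1 - γ) * (t + 2) * v ^ (1 - γ - 1)) := by
            apply mul_le_mul_of_nonneg_left _ hC0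
            simpa [mul_comm] using hb
        _ = M * (t + 2) * v ^ (-γ) := by
            rw [hC]
            have : (1 - γ - 1 : ℝ) = -γ := by ring
            rw [this]; field_simp
    have hpos : 0 ≤ h u := by
      have : h u = C * ((v + (t + 2)) ^ (1 - γ) - v ^ (1 - γ)) := by
        simp only [hh]; rw [hmax, hbase]
      rw [this]; exact mul_nonneg hC0 hdiff0
    have habs : |h u| = h u := abs_of_nonneg hpos
    have hFle : F u ≤ K * (-u) ^ (-(γ * α)) := by
      rw [hF]
      simp only
      rw [habs]
      calc (h u) ^ α ≤ (M * (t + 2) * v ^ (-γ)) ^ α :=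
            Real.rpow_le_rpow hpos hle1 hα0.le
        _ = (M * (t + 2)) ^ α * (v ^ (-γ)) ^ α :=
            Real.mul_rpow (by positivity) (Real.rpow_nonneg hv0.le _)
        _ = K * (-u) ^ (-(γ * α)) := by
            show (M * (t + 2)) ^ α * (v ^ (-γ)) ^ α = K * v ^ (-(γ * α))
            rw [← Real.rpow_mul hv0.le, neg_mul, hK]
    have hFnn : 0 ≤ F u := Real.rpow_nonneg (abs_nonneg _) _
    rw [Real.norm_of_nonneg hFnn]
    exact hFle
  · exact hcont.continuousOn.integrableOn_compact isCompact_Icc
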